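/- arXiv:2411.12512 — 5 statements merged into one kernel-verified Lean document; each statement's English description precedes it below -/
import Mathlib

section
/- Consider the lazy random walk on (ℤ/qℤ)^h starting at 0, where at each step an index i ∈ [h] and a value m ∈ ℤ/qℤ are drawn independently and uniformly at random, and m·e_i is added to the current position. If k ≥ 2h(log h + log(1/ψ)) for some ψ ∈ (0,1), then for every u ∈ (ℤ/qℤ)^h the probability that the walk is at u after k steps is at least (1-ψ)/q^h. -/
/-- The position of the lazy random walk on `(ℤ/qℤ)^h` after `k` steps,
given the sequence of step choices `ω j = (i_j, m_j)`: at each step `m_j · e_{i_j}`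
is added to the current position. -/
noncomputable def walkPos (q h k : ℕ) [NeZero q] (ω : Fin k → Fin h × ZMod q) :
    Fin h → ZMod q :=
  ∑ j, Pi.single (ω j).1 (ω j).2

section Aux

variable (q h k : ℕ) [NeZero q]

/-- The linear step-summing map, bundled as an additive hom in the values `m`. -/
noncomputable def Tmap (ι : Fin k → Fin h) : (Fin k → ZMod q) →+ (Fin h → ZMod q) :=
  ∑ j : Fin k, (AddMonoidHom.single (fun _ : Fin h => ZMod q) (ι j)).comp
      (Pi.evalAddMonoidHom (fun _ : Fin k => ZMod q) j)

lemma Tmap_apply (ι : Fin k → Fin h) (m : Fin k → ZMod q) :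
    Tmap q h k ι m = ∑ j, Pi.single (ι j) (m j) := by
  simp [Tmap, AddMonoidHom.finset_sum_apply, AddMonoidHom.single]; rfl

lemma walkPos_eq (ω : Fin k → Fin h × ZMod q) :
    walkPos q h k ω = Tmap q h k (fun j => (ω j).1) (fun j => (ω j).2) := by
  rw [Tmap_apply]; rfl

lemma Tmap_single (ι : Fin k → Fin h) (j0 : Fin k) (c : ZMod q) :
    Tmap q h k ι (Pi.single j0 c) = Pi.single (ι j0) c := by
  rw [Tmap_apply, Finset.sum_eq_single j0]
  · rw [Pi.single_eq_same]
  · intro b _ hb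
    rw [Pi.single_eq_of_ne hb, Pi.single_zero]
  · intro hj; exact absurd (Finset.mem_univ j0) hj

lemma Tmap_exists_preimage (ι : Fin k → Fin h) (hι : Function.Surjective ι)
    (u : Fin h → ZMod q) : ∃ m, Tmap q h k ι m = u := by
  refine ⟨∑ i, Pi.single (Function.surjInv hι i) (u i), ?_⟩
  rw [map_sum]
  simp only [Tmap_single, Function.surjInv_eq hι]
  funext x
  rw [Finset.sum_apply]
  exact Fintype.sum_pi_single x u

/-- For a surjective index sequence, the fiber over `u` is large: `q^k ≤ q^h * card`. -/
lemma fiber_card_ge (ι : Fin k → Fin h) (hι : Function.Surjective ι)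
    (u : Fin h → ZMod q) :
    q ^ k ≤ q ^ h *
      (Finset.univ.filter (fun m : Fin k → ZMod q => Tmap q h k ι m = u)).card := by
  obtain ⟨m0, hm0⟩ := Tmap_exists_preimage q h k ι hι u
  have hcard : (Finset.univ : Finset (Fin k → ZMod q)).card =
      ∑ v : Fin h → ZMod q,
        (Finset.univ.filter (fun m : Fin k → ZMod q => Tmap q h k ι m = v)).card :=
    Finset.card_eq_sum_card_fiberwise (fun x _ => Finset.mem_univ _)
  have hle : ∀ v : Fin h → ZMod q,
      (Finset.univ.filter (fun m : Fin k → ZMod q => Tmap q h k ι m = v)).card ≤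
      (Finset.univ.filter (fun m : Fin k → ZMod q => Tmap q h k ι m = u)).card := by
    intro v
    rcases (Finset.univ.filter
        (fun m : Fin k → ZMod q => Tmap q h k ι m = v)).eq_empty_or_nonempty with he | hne
    · simp [he]
    · obtain ⟨m1, hm1⟩ := hne
      simp only [Finset.mem_filter, Finset.mem_univ, true_and] at hm1
      apply Finset.card_le_card_of_injOn (fun x => x + (m0 - m1))
      · intro x hx
        simp only [Finset.mem_coe, Finset.mem_filter, Finset.mem_univ, true_and] at hx ⊢
        rw [map_add, map_sub, hx, hm0, hm1]
        abel
      · intro a _ b _ hab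
        exact add_right_cancel hab
  calc q ^ k = (Finset.univ : Finset (Fin k → ZMod q)).card := by
        simp [ZMod.card]
    _ = ∑ v : Fin h → ZMod q,
        (Finset.univ.filter (fun m : Fin k → ZMod q => Tmap q h k ι m = v)).card := hcard
    _ ≤ ∑ _v : Fin h → ZMod q,
        (Finset.univ.filter (fun m : Fin k → ZMod q => Tmap q h k ι m = u)).card :=
        Finset.sum_le_sum (fun v _ => hle v)
    _ = q ^ h *
        (Finset.univ.filter (fun m : Fin k → ZMod q => Tmap q h k ι m = u)).card := by
        rw [Finset.sum_const, Finset.card_univ]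
        simp [ZMod.card, smul_eq_mul]

/-- Count of index sequences avoiding a fixed coordinate. -/
lemma avoid_card (i : Fin h) :
    (Finset.univ.filter (fun ι : Fin k → Fin h => ∀ j, ι j ≠ i)).card ≤
      (h - 1) ^ k := by
  classical
  have : (Finset.univ.filter (fun ι : Fin k → Fin h => ∀ j, ι j ≠ i)).card =
      Fintype.card {ι : Fin k → Fin h // ∀ j, ι j ≠ i} := by
    rw [Fintype.card_subtype]
  rw [this]
  have e : {ι : Fin k → Fin h // ∀ j, ι j ≠ i} ≃ (Fin k → {x : Fin h // x ≠ i}) :=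
    Equiv.subtypePiEquivPi (p := fun _ x => x ≠ i)
  rw [Fintype.card_congr e, Fintype.card_fun]
  have : Fintype.card {x : Fin h // x ≠ i} = h - 1 := by
    simp [Fintype.card_subtype_compl]
  rw [this, Fintype.card_fin]

end Aux

/-- Lower bound on the point probabilities of the lazy random walk on `(ℤ/qℤ)^h`:
if `k ≥ 2h(log h + log(1/ψ))`, then for every `u` the probability (uniform over all
`(h·q)^k` step sequences) that the walk is at `u` after `k` steps is at least
`(1-ψ)/q^h`. -/
theorem lazy_walk_lower_bound (q h k : ℕ) [NeZero q] (hq : 2 ≤ q) (hh : 2 ≤ h)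
    (ψ : ℝ) (hψ : ψ ∈ Set.Ioo (0 : ℝ) 1)
    (hk : (k : ℝ) ≥ 2 * h * (Real.log h + Real.log (1 / ψ)))
    (u : Fin h → ZMod q) :
    (1 - ψ) / (q : ℝ) ^ h ≤
      ((Finset.univ.filter (fun ω : Fin k → Fin h × ZMod q => walkPos q h k ω = u)).card : ℝ)
        / ((h * q : ℕ) : ℝ) ^ k := by
  classical
  obtain ⟨hψ0, hψ1⟩ := hψ
  set A : Finset (Fin k → Fin h × ZMod q) :=
    Finset.univ.filter (fun ω : Fin k → Fin h × ZMod q => walkPos q h k ω = u) with hA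
  set Surj : Finset (Fin k → Fin h) :=
    Finset.univ.filter (fun ι : Fin k → Fin h => Function.Surjective ι) with hSurj
  -- Fiber decomposition of A over index sequences
  have hfib : ∀ ι : Fin k → Fin h,
      (A.filter (fun ω => (fun j => (ω j).1) = ι)).card =
      (Finset.univ.filter (fun m : Fin k → ZMod q => Tmap q h k ι m = u)).card := by
    intro ι
    apply Finset.card_nbij' (fun ω => fun j => (ω j).2) (fun m => fun j => (ι j, m j))
    · intro ω hω
      simp only [hA, Finset.mem_coe, Finset.mem_filter, Finset.mem_univ, true_and] at hω ⊢
      obtain ⟨hw, hι⟩ := hω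
      rw [← hι]
      rw [walkPos_eq] at hw
      exact hw
    · intro m hm
      simp only [hA, Finset.mem_coe, Finset.mem_filter, Finset.mem_univ, true_and] at hm ⊢
      constructor
      · rw [walkPos_eq]; exact hm
      · trivial
    · intro ω hω
      simp only [hA, Finset.mem_coe, Finset.mem_filter] at hω
      funext j
      have h1 := congrFun hω.2 j
      exact Prod.ext h1.symm rfl
    · intro m _; rfl
  -- main cardinality inequality (in ℕ): q^k * Surj.card ≤ q^h * A.card
  have hcount : q ^ k * Surj.card ≤ q ^ h * A.card := by
    have hAcard : A.card =
        ∑ ι : Fin k → Fin h, (A.filter (fun ω => (fun j => (ω j).1) = ι)).card :=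
      Finset.card_eq_sum_card_fiberwise (fun x _ => Finset.mem_univ _)
    have h1 : ∑ ι ∈ Surj, (A.filter (fun ω => (fun j => (ω j).1) = ι)).card ≤ A.card := by
      rw [hAcard]
      exact Finset.sum_le_sum_of_subset (Finset.subset_univ _)
    have h2 : q ^ k * Surj.card ≤
        q ^ h * ∑ ι ∈ Surj, (A.filter (fun ω => (fun j => (ω j).1) = ι)).card := by
      rw [Finset.mul_sum]
      calc q ^ k * Surj.card = ∑ _ι ∈ Surj, q ^ k := by
            rw [Finset.sum_const, smul_eq_mul, mul_comm]
        _ ≤ ∑ ι ∈ Surj, q ^ h * (A.filter (fun ω => (fun j => (ω j).1) = ι)).card := by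
            apply Finset.sum_le_sum
            intro ι hι
            simp only [hSurj, Finset.mem_filter] at hι
            rw [hfib ι]
            exact fiber_card_ge q h k ι hι.2 u
    calc q ^ k * Surj.card ≤ _ := h2
      _ ≤ q ^ h * A.card := Nat.mul_le_mul_left _ h1
  -- surjective count lower bound (in ℕ): h^k ≤ Surj.card + h * (h-1)^k
  have hsurjcount : h ^ k ≤ Surj.card + h * (h - 1) ^ k := by
    have hsplit : Surj.card +
        (Finset.univ.filter (fun ι : Fin k → Fin h => ¬ Function.Surjective ι)).card =
        h ^ k := by
      rw [hSurj, Finset.card_filter_add_card_filter_not]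
      simp [Fintype.card_fun]
    have hsub : (Finset.univ.filter (fun ι : Fin k → Fin h => ¬ Function.Surjective ι)) ⊆
        Finset.univ.biUnion (fun i : Fin h =>
          Finset.univ.filter (fun ι : Fin k → Fin h => ∀ j, ι j ≠ i)) := by
      intro ι hι
      simp only [Finset.mem_filter, Finset.mem_univ, true_and] at hι
      unfold Function.Surjective at hι
      push_neg at hι
      obtain ⟨i, hi⟩ := hι
      simp only [Finset.mem_biUnion, Finset.mem_filter, Finset.mem_univ, true_and]
      exact ⟨i, hi⟩
    have hbound : (Finset.univ.filter
        (fun ι : Fin k → Fin h => ¬ Function.Surjective ι)).card ≤ h * (h - 1) ^ k := by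
      calc _ ≤ (Finset.univ.biUnion (fun i : Fin h =>
            Finset.univ.filter (fun ι : Fin k → Fin h => ∀ j, ι j ≠ i))).card :=
            Finset.card_le_card hsub
        _ ≤ ∑ i : Fin h, (Finset.univ.filter
            (fun ι : Fin k → Fin h => ∀ j, ι j ≠ i)).card := Finset.card_biUnion_le
        _ ≤ ∑ _i : Fin h, (h - 1) ^ k := Finset.sum_le_sum (fun i _ => avoid_card h k i)
        _ = h * (h - 1) ^ k := by rw [Finset.sum_const, Finset.card_univ, Fintype.card_fin,
            smul_eq_mul]
    omega
  -- analytic bound: h * (h-1)^k ≤ ψ * h^k (in ℝ)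
  have hh1 : (1:ℝ) ≤ (h:ℝ) := by exact_mod_cast Nat.one_le_of_lt hh
  have hh0 : (0:ℝ) < (h:ℝ) := by positivity
  have hcast1 : ((h - 1 : ℕ) : ℝ) = (h:ℝ) - 1 := by
    have : 1 ≤ h := Nat.one_le_of_lt hh
    push_cast [this]; ring
  have hanal : (h:ℝ) * ((h - 1 : ℕ):ℝ) ^ k ≤ ψ * (h:ℝ) ^ k := by
    rw [hcast1]
    have hexp1 : (1 - 1/(h:ℝ)) ≤ Real.exp (-(1/(h:ℝ))) := by
      have := Real.add_one_le_exp (-(1/(h:ℝ)))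
      linarith
    have hnn : (0:ℝ) ≤ 1 - 1/(h:ℝ) := by
      have : 1/(h:ℝ) ≤ 1 := by
        rw [div_le_one hh0]; exact hh1
      linarith
    have hpow : (1 - 1/(h:ℝ)) ^ k ≤ Real.exp (-(1/(h:ℝ))) ^ k :=
      pow_le_pow_left₀ hnn hexp1 k
    have hexpk : Real.exp (-(1/(h:ℝ))) ^ k = Real.exp (-((k:ℝ)/(h:ℝ))) := by
      rw [← Real.exp_nat_mul]; ring_nf
    have hkh : 2 * (Real.log h + Real.log (1/ψ)) ≤ (k:ℝ) / (h:ℝ) := by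
      rw [le_div_iff₀ hh0]
      calc 2 * (Real.log h + Real.log (1/ψ)) * (h:ℝ)
          = 2 * (h:ℝ) * (Real.log h + Real.log (1/ψ)) := by ring
        _ ≤ (k:ℝ) := hk
    have hmono : Real.exp (-((k:ℝ)/(h:ℝ))) ≤
        Real.exp (-(2 * (Real.log h + Real.log (1/ψ)))) :=
      Real.exp_le_exp.mpr (by linarith)
    have hval : Real.exp (-(2 * (Real.log h + Real.log (1/ψ)))) = ψ^2 / (h:ℝ)^2 := by
      rw [one_div, Real.log_inv]
      rw [show -(2 * (Real.log h + -Real.log ψ)) = 2 * Real.log ψ - 2 * Real.log h by ring]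
      rw [Real.exp_sub, two_mul, two_mul, Real.exp_add, Real.exp_add,
        Real.exp_log hψ0, Real.exp_log hh0]
      ring
    have hkey : (1 - 1/(h:ℝ)) ^ k ≤ ψ^2 / (h:ℝ)^2 := by
      calc (1 - 1/(h:ℝ)) ^ k ≤ Real.exp (-(1/(h:ℝ))) ^ k := hpow
        _ = Real.exp (-((k:ℝ)/(h:ℝ))) := hexpk
        _ ≤ Real.exp (-(2 * (Real.log h + Real.log (1/ψ)))) := hmono
        _ = ψ^2 / (h:ℝ)^2 := by rw [hval]
    have hfactor : ((h:ℝ) - 1) ^ k = (h:ℝ)^k * (1 - 1/(h:ℝ)) ^ k := by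
      rw [← mul_pow]
      congr 1
      field_simp
    rw [hfactor]
    have hchain : (h:ℝ) * ((h:ℝ)^k * (1 - 1/(h:ℝ)) ^ k) ≤
        (h:ℝ) * ((h:ℝ)^k * (ψ^2 / (h:ℝ)^2)) := by
      apply mul_le_mul_of_nonneg_left _ (le_of_lt hh0)
      apply mul_le_mul_of_nonneg_left hkey (by positivity)
    refine hchain.trans ?_
    rw [show (h:ℝ) * ((h:ℝ)^k * (ψ^2 / (h:ℝ)^2)) = (h:ℝ)^k * (ψ^2 / (h:ℝ)) by
      field_simp]
    rw [show ψ * (h:ℝ)^k = (h:ℝ)^k * ψ by ring]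
    apply mul_le_mul_of_nonneg_left _ (by positivity)
    rw [div_le_iff₀ hh0]
    nlinarith
  -- put it together in ℝ
  have hq0 : (0:ℝ) < (q:ℝ) := by
    have : 0 < q := Nat.pos_of_ne_zero (NeZero.ne q)
    exact_mod_cast this
  have hqh : (0:ℝ) < (q:ℝ)^h := by positivity
  have hhq : (0:ℝ) < (((h*q : ℕ)):ℝ)^k := by
    have : 0 < h * q := Nat.mul_pos (by omega) (Nat.pos_of_ne_zero (NeZero.ne q))
    have : (0:ℝ) < ((h*q:ℕ):ℝ) := by exact_mod_cast this
    positivity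
  rw [div_le_div_iff₀ hqh hhq]
  have hcount' : (q:ℝ)^k * Surj.card ≤ (q:ℝ)^h * A.card := by
    exact_mod_cast hcount
  have hsurj' : (h:ℝ)^k ≤ (Surj.card : ℝ) + (h:ℝ) * ((h-1:ℕ):ℝ)^k := by
    exact_mod_cast hsurjcount
  have hS : (1 - ψ) * (h:ℝ)^k ≤ (Surj.card : ℝ) := by nlinarith
  have hcastk : (((h*q : ℕ)):ℝ)^k = (h:ℝ)^k * (q:ℝ)^k := by
    push_cast
    rw [mul_pow]
  rw [hcastk]
  calc (1 - ψ) * ((h:ℝ)^k * (q:ℝ)^k) = ((1 - ψ) * (h:ℝ)^k) * (q:ℝ)^k := by ring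
    _ ≤ (Surj.card : ℝ) * (q:ℝ)^k := by
        apply mul_le_mul_of_nonneg_right hS (by positivity)
    _ = (q:ℝ)^k * Surj.card := by ring
    _ ≤ (q:ℝ)^h * A.card := hcount'
    _ = (A.card : ℝ) * (q:ℝ)^h := by ring
end

section
/- Consider the lazy random walk on (ℤ/qℤ)^h starting at 0, where at each step an index i ∈ [h] and a value m ∈ ℤ/qℤ are drawn independently and uniformly at random, and m·e_i is added to the current position. If k ≥ 4h(log h + log q + log(1/ψ)) for some ψ ∈ (0,1), then for every u ∈ (ℤ/qℤ)^h the probability that the walk is at u after k steps is at most (1+ψ)/q^h. -/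
open Finset

set_option maxHeartbeats 1000000 in
private lemma card_vanishing {α β : Type*} [Fintype α] [DecidableEq α] [Fintype β] [DecidableEq β]
    (z : β) (R : Finset α) :
    (univ.filter (fun f : α → β => ∀ j ∈ R, f j = z)).card
      = Fintype.card β ^ (Fintype.card α - R.card) := by
  have he : univ.filter (fun f : α → β => ∀ j ∈ R, f j = z)
      = Fintype.piFinset (fun j => if j ∈ R then {z} else univ) := by
    ext f
    simp only [mem_filter, mem_univ, true_and, Fintype.mem_piFinset]
    constructor
    · intro hf j
      by_cases hj : j ∈ R <;> simp [hj, hf]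
    · intro hf j hj
      have := hf j
      simpa [hj] using this
  rw [he, Fintype.card_piFinset]
  have h2 : ∀ j : α, (if j ∈ R then ({z} : Finset β) else univ).card
      = if j ∈ R then 1 else Fintype.card β := by
    intro j; by_cases hj : j ∈ R <;> simp [hj]
  rw [Finset.prod_congr rfl (fun j _ => h2 j), Finset.prod_ite, Finset.prod_const,
    Finset.prod_const, one_pow, one_mul]
  congr 1
  rw [← Finset.card_compl]
  congr 1
  ext j; simp

set_option maxHeartbeats 1000000 in
private lemma count_le (q h k : ℕ) [NeZero q] (ι : Fin k → Fin h) (u : Fin h → ZMod q) :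
    (univ.filter (fun m : Fin k → ZMod q =>
        ∀ i, ∑ j ∈ univ.filter (fun j => ι j = i), m j = u i)).card
      ≤ q ^ (k - (univ.image ι).card) := by
  rcases Nat.eq_zero_or_pos k with hk0 | hk0
  · subst hk0
    calc (univ.filter (fun m : Fin 0 → ZMod q =>
        ∀ i, ∑ j ∈ univ.filter (fun j => ι j = i), m j = u i)).card
        ≤ (univ : Finset (Fin 0 → ZMod q)).card := Finset.card_le_card (filter_subset _ _)
      _ = 1 := by simp [Finset.card_univ]
      _ ≤ q ^ (0 - (univ.image ι).card) := Nat.one_le_pow _ _ (Nat.pos_of_ne_zero (NeZero.ne q))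
  · have hne : Nonempty (Fin k) := ⟨⟨0, hk0⟩⟩
    set S := univ.image ι with hS
    set rep : Fin h → Fin k := fun i => Function.invFun ι i with hrepdef
    have hrep : ∀ i ∈ S, ι (rep i) = i := by
      intro i hi
      obtain ⟨j, _, hj⟩ := mem_image.mp hi
      exact Function.invFun_eq ⟨j, hj⟩
    set R := S.image rep with hR
    have hRcard : R.card = S.card := card_image_of_injOn (fun i hi i' hi' hee => by
      rw [← hrep i hi, ← hrep i' hi', hee])
    have hfib : ∀ i ∈ S, ∀ j' ∈ R, ι j' = i → j' = rep i := by
      intro i hi j' hj' hij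
      obtain ⟨i', hi', rfl⟩ := mem_image.mp hj'
      rw [hrep i' hi'] at hij
      rw [hij]
    have hmain : (univ.filter (fun m : Fin k → ZMod q =>
        ∀ i, ∑ j ∈ univ.filter (fun j => ι j = i), m j = u i)).card
        ≤ (univ.filter (fun f : Fin k → ZMod q => ∀ j ∈ R, f j = (0 : ZMod q))).card := by
      apply Finset.card_le_card_of_injOn (fun m j => if j ∈ R then 0 else m j)
      · intro m _
        simp only [coe_filter, Set.mem_setOf_eq, mem_filter, mem_univ, true_and]
        intro j hj
        simp [hj]
      · intro m₁ hm₁ m₂ hm₂ hF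
        simp only [coe_filter, Set.mem_setOf_eq, mem_univ, true_and] at hm₁ hm₂
        have hFj : ∀ j, (if j ∈ R then (0 : ZMod q) else m₁ j)
            = (if j ∈ R then 0 else m₂ j) := fun j => congrFun hF j
        funext j
        by_cases hj : j ∈ R
        · obtain ⟨i, hi, rfl⟩ := mem_image.mp hj
          have hmem : rep i ∈ univ.filter (fun j' => ι j' = i) := by
            simp [hrep i hi]
          have herase : ∀ m' : Fin k → ZMod q,
              (∀ i', ∑ j' ∈ univ.filter (fun j' => ι j' = i'), m' j' = u i') →
              m' (rep i) = u i - ∑ j' ∈ (univ.filter (fun j' => ι j' = i)).erase (rep i), m' j' := by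
            intro m' hm'
            have := Finset.add_sum_erase _ m' hmem
            rw [hm' i] at this
            linear_combination this
          have heq : ∑ j' ∈ (univ.filter (fun j' => ι j' = i)).erase (rep i), m₁ j'
              = ∑ j' ∈ (univ.filter (fun j' => ι j' = i)).erase (rep i), m₂ j' := by
            apply Finset.sum_congr rfl
            intro j' hj'
            have hj'R : j' ∉ R := by
              intro hj'R
              have := hfib i hi j' hj'R (by simpa using (Finset.mem_of_mem_erase hj'))
              exact (Finset.ne_of_mem_erase hj') this
            have := hFj j'
            simpa [hj'R] using this
          rw [herase m₁ hm₁, herase m₂ hm₂, heq]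
        · have := hFj j
          simpa [hj] using this
    refine hmain.trans (le_of_eq ?_)
    have hcv := card_vanishing (0 : ZMod q) R
    rw [ZMod.card, Fintype.card_fin, hRcard] at hcv
    convert hcv using 2
    ext f; simp

set_option maxHeartbeats 1000000 in
private lemma count_split (q h k : ℕ) [NeZero q] (u : Fin h → ZMod q) :
    (univ.filter (fun ω : Fin k → Fin h × ZMod q => walkPos q h k ω = u)).card
      = ∑ ι : Fin k → Fin h, (univ.filter (fun m : Fin k → ZMod q =>
          ∀ i, ∑ j ∈ univ.filter (fun j => ι j = i), m j = u i)).card := by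
  classical
  rw [Finset.card_filter]
  rw [← Equiv.sum_comp (Equiv.arrowProdEquivProdArrow (Fin k) (fun _ => Fin h) (fun _ => ZMod q)).symm
      (fun ω => if walkPos q h k ω = u then (1 : ℕ) else 0)]
  rw [Fintype.sum_prod_type]
  refine Finset.sum_congr rfl (fun ι _ => ?_)
  rw [Finset.card_filter]
  refine Finset.sum_congr rfl (fun m _ => ?_)
  refine if_congr ?_ rfl rfl
  rw [show walkPos q h k ((Equiv.arrowProdEquivProdArrow (Fin k) (fun _ => Fin h) (fun _ => ZMod q)).symm (ι, m))
      = ∑ j, Pi.single (ι j) (m j) from rfl, funext_iff]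
  refine forall_congr' (fun i => ?_)
  rw [Finset.sum_apply]
  have hps : ∀ j, (Pi.single (ι j) (m j) : Fin h → ZMod q) i = if ι j = i then m j else 0 := by
    intro j
    rw [Pi.single_apply]
    exact if_congr eq_comm rfl rfl
  rw [Finset.sum_congr rfl (fun j _ => hps j), ← Finset.sum_filter]

set_option maxHeartbeats 1000000 in
private lemma sum_q_pow (q h k : ℕ) :
    ∑ ι : Fin k → Fin h, ((q:ℝ)) ^ (h - (univ.image ι).card)
      = ∑ s ∈ range (h+1), (h.choose s : ℝ) * ((q:ℝ)-1)^s * ((h - s : ℕ) : ℝ)^k := by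
  classical
  have step1 : ∀ ι : Fin k → Fin h, (q:ℝ) ^ (h - (univ.image ι).card)
      = ∑ S ∈ (univ.powerset : Finset (Finset (Fin h))),
          if S ⊆ (univ.image ι)ᶜ then ((q:ℝ)-1)^S.card else 0 := by
    intro ι
    have hpa := Finset.prod_add (fun _ : Fin h => ((q:ℝ)-1)) (fun _ => (1:ℝ)) ((univ.image ι)ᶜ)
    simp only [sub_add_cancel, Finset.prod_const, Finset.prod_const_one, one_pow, mul_one] at hpa
    rw [Finset.card_compl, Fintype.card_fin] at hpa
    rw [hpa]
    have hps : ((univ.image ι)ᶜ).powerset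
        = (univ.powerset : Finset (Finset (Fin h))).filter (· ⊆ (univ.image ι)ᶜ) := by
      ext S; simp
    rw [hps, Finset.sum_filter]
  rw [Finset.sum_congr rfl (fun ι _ => step1 ι), Finset.sum_comm]
  have step2 : ∀ S : Finset (Fin h),
      (∑ ι : Fin k → Fin h, if S ⊆ (univ.image ι)ᶜ then ((q:ℝ)-1)^S.card else 0)
        = ((q:ℝ)-1)^S.card * ((h - S.card : ℕ) : ℝ)^k := by
    intro S
    rw [← Finset.sum_filter, Finset.sum_const, nsmul_eq_mul]
    have hfil : univ.filter (fun ι : Fin k → Fin h => S ⊆ (univ.image ι)ᶜ)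
        = Fintype.piFinset (fun _ : Fin k => Sᶜ) := by
      have hiff : ∀ ι : Fin k → Fin h, (S ⊆ (univ.image ι)ᶜ) ↔ ∀ j, ι j ∈ Sᶜ := by
        intro ι
        rw [Finset.subset_compl_comm, Finset.image_subset_iff]
        simp
      ext ι
      simp [Fintype.mem_piFinset, hiff]
    rw [hfil, Fintype.card_piFinset]
    simp only [Finset.prod_const, Finset.card_univ, Fintype.card_fin, Finset.card_compl]
    push_cast
    ring
  rw [Finset.sum_congr rfl (fun S _ => step2 S), Finset.sum_powerset]
  rw [Finset.card_univ, Fintype.card_fin]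
  refine Finset.sum_congr rfl (fun s hs => ?_)
  have := Finset.sum_powersetCard s (univ : Finset (Fin h))
    (fun n => ((q:ℝ)-1)^n * ((h - n : ℕ) : ℝ)^k)
  rw [Finset.card_univ, Fintype.card_fin] at this
  rw [this, nsmul_eq_mul]
  ring

set_option maxHeartbeats 1000000 in
private lemma analytic_bound (q h k : ℕ) (hq : 2 ≤ q) (hh : 2 ≤ h) (ψ : ℝ)
    (hψ0 : 0 < ψ) (hψ1 : ψ < 1)
    (hk : (k : ℝ) ≥ 4 * h * (Real.log h + Real.log q + Real.log (1 / ψ))) :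
    ∑ s ∈ range (h+1), (h.choose s : ℝ) * ((q:ℝ)-1)^s * ((h - s : ℕ) : ℝ)^k
      ≤ (1+ψ) * (h:ℝ)^k := by
  have hh0 : (0:ℝ) < h := by positivity
  have hh0' : (2:ℝ) ≤ h := by exact_mod_cast hh
  have hq0' : (2:ℝ) ≤ q := by exact_mod_cast hq
  have hq0 : (0:ℝ) < q := by linarith
  set E : ℝ := Real.exp (-((k:ℝ)/h)) with hEdef
  set P : ℝ := (h:ℝ) * q with hPdef
  have hP0 : 0 < P := by positivity
  have hP4 : (4:ℝ) ≤ P := by nlinarith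
  have hE0 : 0 < E := Real.exp_pos _
  set L : ℝ := Real.log h + Real.log q + Real.log (1/ψ) with hLdef
  have hL : Real.exp L = P * (1/ψ) := by
    rw [hLdef, Real.exp_add, Real.exp_add, Real.exp_log hh0, Real.exp_log hq0,
      Real.exp_log (by positivity)]
  have hkh : 4 * L ≤ (k:ℝ)/h := by
    rw [le_div_iff₀ hh0]
    nlinarith [hk]
  have hE1 : E ≤ (ψ / P)^4 := by
    have h1 : E ≤ Real.exp (-(4*L)) := Real.exp_le_exp.mpr (by linarith)
    have h2 : Real.exp (-(4*L)) = (ψ/P)^4 := by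
      have : -(4*L) = (4:ℕ) * (-L) := by push_cast; ring
      rw [this, Real.exp_nat_mul, Real.exp_neg, hL]
      congr 1
      field_simp
    linarith [h2 ▸ h1]
  set x : ℝ := P * E with hxdef
  have hx0 : 0 < x := by positivity
  have hx : x ≤ ψ/64 := by
    have h1 : x ≤ P * (ψ^4/P^4) := by
      have := mul_le_mul_of_nonneg_left hE1 (le_of_lt hP0)
      rw [div_pow] at this
      exact this
    have h2 : P * (ψ^4/P^4) = ψ^4 / P^3 := by
      field_simp
    have h3 : ψ^4/P^3 ≤ ψ/64 := by
      rw [div_le_div_iff₀ (by positivity) (by norm_num)]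
      have hP3 : (64:ℝ) ≤ P^3 := by
        nlinarith [pow_le_pow_left₀ (by norm_num : (0:ℝ) ≤ 4) hP4 3]
      have hψ3 : ψ^3 ≤ 1 := pow_le_one₀ (le_of_lt hψ0) (le_of_lt hψ1)
      nlinarith [mul_le_mul_of_nonneg_left hψ3 (by positivity : (0:ℝ) ≤ 64*ψ),
        mul_le_mul_of_nonneg_left hP3 (le_of_lt hψ0)]
    linarith [h2 ▸ h1]
  have hxhalf : x ≤ 1/2 := by linarith
  have hxlt1 : x < 1 := by linarith
  rw [Finset.sum_range_succ']
  have h0term : (h.choose 0 : ℝ) * ((q:ℝ)-1)^0 * ((h - 0 : ℕ) : ℝ)^k = (h:ℝ)^k := by simp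
  rw [h0term]
  have hterm : ∀ s ∈ range h, (h.choose (s+1) : ℝ) * ((q:ℝ)-1)^(s+1) * ((h - (s+1) : ℕ) : ℝ)^k
      ≤ (h:ℝ)^k * x^(s+1) := by
    intro s hs
    have hs' : s + 1 ≤ h := Nat.succ_le_of_lt (mem_range.mp hs)
    have hs'' : ((s:ℝ)+1) ≤ h := by exact_mod_cast hs'
    have c1 : (h.choose (s+1) : ℝ) ≤ (h:ℝ)^(s+1) := by
      exact_mod_cast Nat.cast_le.mpr (Nat.choose_le_pow h (s+1))
    have c2 : ((q:ℝ)-1)^(s+1) ≤ (q:ℝ)^(s+1) :=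
      pow_le_pow_left₀ (by linarith) (by linarith) _
    have cbase : ((h - (s+1) : ℕ) : ℝ) ≤ (h:ℝ) * Real.exp (-(((s:ℝ)+1))/h) := by
      rw [Nat.cast_sub hs']
      have hexp : 1 + (-(((s:ℝ)+1))/h) ≤ Real.exp (-(((s:ℝ)+1))/h) := by
        have := Real.add_one_le_exp (-(((s:ℝ)+1))/h)
        linarith
      have := mul_le_mul_of_nonneg_left hexp (le_of_lt hh0)
      have heq : (h:ℝ) * (1 + (-(((s:ℝ)+1))/h)) = (h:ℝ) - ((s:ℝ)+1) := by
        field_simp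
        ring
      push_cast
      linarith [heq ▸ this]
    have cbase0 : (0:ℝ) ≤ ((h - (s+1) : ℕ) : ℝ) := Nat.cast_nonneg _
    have c3 : ((h - (s+1) : ℕ) : ℝ)^k ≤ ((h:ℝ) * Real.exp (-(((s:ℝ)+1))/h))^k :=
      pow_le_pow_left₀ cbase0 cbase k
    have c4 : ((h:ℝ) * Real.exp (-(((s:ℝ)+1))/h))^k = (h:ℝ)^k * E^(s+1) := by
      rw [mul_pow]
      congr 1
      rw [← Real.exp_nat_mul, hEdef, ← Real.exp_nat_mul]
      congr 1
      push_cast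
      field_simp
    calc (h.choose (s+1) : ℝ) * ((q:ℝ)-1)^(s+1) * ((h - (s+1) : ℕ) : ℝ)^k
        ≤ (h:ℝ)^(s+1) * (q:ℝ)^(s+1) * ((h:ℝ)^k * E^(s+1)) := by
          exact mul_le_mul (mul_le_mul c1 c2 (pow_nonneg (by linarith) _) (by positivity))
            (c3.trans_eq c4) (pow_nonneg (Nat.cast_nonneg _) k) (by positivity)
      _ = (h:ℝ)^k * x^(s+1) := by
          rw [hxdef, hPdef, mul_pow, mul_pow]
          ring
  have hsum : ∑ s ∈ range h, (h.choose (s+1) : ℝ) * ((q:ℝ)-1)^(s+1) * ((h - (s+1) : ℕ) : ℝ)^k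
      ≤ (h:ℝ)^k * ∑ s ∈ range h, x^(s+1) := by
    rw [Finset.mul_sum]
    exact Finset.sum_le_sum hterm
  have hgeom : ∑ s ∈ range h, x^(s+1) ≤ 2 * x := by
    have h1 : ∑ s ∈ range h, x^(s+1) = x * ∑ s ∈ range h, x^s := by
      rw [Finset.mul_sum]
      exact Finset.sum_congr rfl (fun s _ => by ring)
    have h2 : ∑ s ∈ range h, x^s ≤ (1-x)⁻¹ := by
      have := Summable.sum_le_tsum (range h) (fun i _ => pow_nonneg (le_of_lt hx0) i)
        (summable_geometric_of_lt_one (le_of_lt hx0) hxlt1)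
      rwa [tsum_geometric_of_lt_one (le_of_lt hx0) hxlt1] at this
    have h3 : (1-x)⁻¹ ≤ 2 := by
      rw [inv_le_comm₀ (by linarith) (by norm_num)]
      linarith
    calc ∑ s ∈ range h, x^(s+1) = x * ∑ s ∈ range h, x^s := h1
      _ ≤ x * 2 := mul_le_mul_of_nonneg_left (h2.trans h3) (le_of_lt hx0)
      _ = 2 * x := by ring
  have hfin : (h:ℝ)^k * (2*x) ≤ ψ * (h:ℝ)^k := by
    have : 2 * x ≤ ψ := by linarith
    nlinarith [pow_pos hh0 k]
  calc (∑ s ∈ range h, (h.choose (s+1) : ℝ) * ((q:ℝ)-1)^(s+1) * ((h - (s+1) : ℕ) : ℝ)^k)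
        + (h:ℝ)^k
      ≤ (h:ℝ)^k * (2*x) + (h:ℝ)^k := by
        have := hsum.trans (mul_le_mul_of_nonneg_left hgeom (by positivity))
        linarith
    _ ≤ ψ * (h:ℝ)^k + (h:ℝ)^k := by linarith
    _ = (1+ψ) * (h:ℝ)^k := by ring

set_option maxHeartbeats 1000000 in
/-- Upper bound on the point probabilities of the lazy random walk on `(ℤ/qℤ)^h`:
if `k ≥ 4h(log h + log q + log(1/ψ))`, then for every `u` the probability (uniform over all
`(h·q)^k` step sequences) that the walk is at `u` after `k` steps is at most
`(1+ψ)/q^h`. -/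
theorem lazy_walk_upper_bound (q h k : ℕ) [NeZero q] (hq : 2 ≤ q) (hh : 2 ≤ h)
    (ψ : ℝ) (hψ : ψ ∈ Set.Ioo (0 : ℝ) 1)
    (hk : (k : ℝ) ≥ 4 * h * (Real.log h + Real.log q + Real.log (1 / ψ)))
    (u : Fin h → ZMod q) :
    ((Finset.univ.filter (fun ω : Fin k → Fin h × ZMod q => walkPos q h k ω = u)).card : ℝ)
        / ((h * q : ℕ) : ℝ) ^ k ≤ (1 + ψ) / (q : ℝ) ^ h := by
  obtain ⟨hψ0, hψ1⟩ := hψ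
  have hq0 : (0:ℝ) < q := by
    have : (2:ℝ) ≤ q := by exact_mod_cast hq
    linarith
  have hh0 : (0:ℝ) < h := by
    have : (2:ℝ) ≤ h := by exact_mod_cast hh
    linarith
  have hhq0 : (0:ℝ) < ((h * q : ℕ) : ℝ) ^ k := by
    have : (0:ℝ) < ((h * q : ℕ) : ℝ) := by push_cast; positivity
    positivity
  rw [div_le_div_iff₀ hhq0 (by positivity)]
  have hcount : ((Finset.univ.filter
        (fun ω : Fin k → Fin h × ZMod q => walkPos q h k ω = u)).card : ℝ)
      ≤ ∑ ι : Fin k → Fin h, (q:ℝ) ^ (k - (univ.image ι).card) := by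
    rw [count_split q h k u]
    push_cast
    apply Finset.sum_le_sum
    intro ι _
    exact_mod_cast count_le q h k ι u
  set Ssum : ℝ := ∑ s ∈ range (h+1), (h.choose s : ℝ) * ((q:ℝ)-1)^s * ((h - s : ℕ) : ℝ)^k
    with hSsum
  have hA : ∑ ι : Fin k → Fin h, (q:ℝ) ^ (k - (univ.image ι).card)
      = (q:ℝ)^k / (q:ℝ)^h * Ssum := by
    rw [hSsum, ← sum_q_pow q h k, Finset.mul_sum]
    refine Finset.sum_congr rfl (fun ι _ => ?_)
    have hrk : (univ.image ι).card ≤ k := by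
      calc (univ.image ι).card ≤ (univ : Finset (Fin k)).card := Finset.card_image_le
        _ = k := by simp
    have hrh : (univ.image ι).card ≤ h := by
      calc (univ.image ι).card ≤ (univ : Finset (Fin h)).card :=
            Finset.card_le_card (Finset.subset_univ _)
        _ = h := by simp
    rw [pow_sub₀ _ (ne_of_gt hq0) hrk, pow_sub₀ _ (ne_of_gt hq0) hrh]
    field_simp
  have hana := analytic_bound q h k hq hh ψ hψ0 hψ1 hk
  have hSnn : 0 ≤ Ssum := by
    rw [hSsum]
    apply Finset.sum_nonneg
    intro s hs
    have h2q : (2:ℝ) ≤ q := by exact_mod_cast hq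
    have : (1:ℝ) ≤ q := by linarith
    have h1 : (0:ℝ) ≤ (q:ℝ) - 1 := by linarith
    positivity
  calc ((Finset.univ.filter
        (fun ω : Fin k → Fin h × ZMod q => walkPos q h k ω = u)).card : ℝ) * (q:ℝ)^h
      ≤ ((q:ℝ)^k / (q:ℝ)^h * Ssum) * (q:ℝ)^h := by
        apply mul_le_mul_of_nonneg_right _ (by positivity)
        exact hcount.trans (le_of_eq hA)
    _ = (q:ℝ)^k * Ssum := by field_simp
    _ ≤ (q:ℝ)^k * ((1+ψ) * (h:ℝ)^k) := mul_le_mul_of_nonneg_left hana (by positivity)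
    _ = (1 + ψ) * ((h * q : ℕ) : ℝ) ^ k := by push_cast; ring
end

section
/- Fix positive integers h, q, k with q ≥ 2 and suppose k ≥ 4h(log h + log q). Then the function t ↦ C(h,t) · q^{-t} · (t/h)^k is nondecreasing on the integers {1, 2, …, h-1}, where C(h,t) is the binomial coefficient. -/
/-- If `k ≥ 4h(log h + log q)` then `t ↦ C(h,t) q^{-t} (t/h)^k` is nondecreasing on
`{1, …, h-1}`: for `1 ≤ t ≤ h-2`,
`C(h,t) q^{-t} (t/h)^k ≤ C(h,t+1) q^{-(t+1)} ((t+1)/h)^k`. -/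
theorem binom_term_monotone (q h k t : ℕ) (hq : 2 ≤ q)
    (hk : (k : ℝ) ≥ 4 * h * (Real.log h + Real.log q))
    (ht1 : 1 ≤ t) (ht2 : t ≤ h - 2) :
    (h.choose t : ℝ) / (q : ℝ) ^ t * ((t : ℝ) / h) ^ k ≤
      (h.choose (t + 1) : ℝ) / (q : ℝ) ^ (t + 1) * (((t : ℝ) + 1) / h) ^ k := by
  have hh3 : 3 ≤ h := by omega
  have ht2' : t + 2 ≤ h := by omega
  set T : ℝ := (t : ℝ) with hTdef
  set H : ℝ := (h : ℝ) with hHdef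
  set Q : ℝ := (q : ℝ) with hQdef
  have hT : (1:ℝ) ≤ T := by rw [hTdef]; exact_mod_cast ht1
  have hT0 : (0:ℝ) < T := by linarith
  have hH2 : T + 2 ≤ H := by rw [hTdef, hHdef]; exact_mod_cast ht2'
  have hH0 : (0:ℝ) < H := by linarith
  have hQ : (2:ℝ) ≤ Q := by rw [hQdef]; exact_mod_cast hq
  have hQ0 : (0:ℝ) < Q := by linarith
  have hknn : (0:ℝ) ≤ (k:ℝ) := Nat.cast_nonneg k
  -- lower bound on log((T+1)/T)
  have hLsub : Real.log (T/(T+1)) ≤ T/(T+1) - 1 :=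
    Real.log_le_sub_one_of_pos (by positivity)
  have hL : 1/(T+1) ≤ Real.log ((T+1)/T) := by
    have heq : Real.log ((T+1)/T) = - Real.log (T/(T+1)) := by
      rw [← Real.log_inv]
      congr 1
      field_simp
    have h1 : T/(T+1) - 1 = -(1/(T+1)) := by field_simp; ring
    rw [heq]
    linarith [hLsub, h1 ▸ hLsub]
  have hlogHQ : Real.log H + Real.log Q ≤ (k:ℝ) * Real.log ((T+1)/T) := by
    have hlognn : 0 ≤ Real.log H + Real.log Q := by
      have h1 := Real.log_nonneg (show (1:ℝ) ≤ H by linarith)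
      have h2 := Real.log_nonneg (show (1:ℝ) ≤ Q by linarith)
      linarith
    have h2 : 4*(Real.log H + Real.log Q) ≤ (k:ℝ)/H := by
      rw [le_div_iff₀ hH0]
      nlinarith [hk]
    have h3 : (k:ℝ)/H ≤ (k:ℝ)/(T+1) :=
      div_le_div_of_nonneg_left hknn (by linarith) (by linarith)
    have h4 : (k:ℝ)/(T+1) = (k:ℝ) * (1/(T+1)) := by ring
    have h5 : (k:ℝ) * (1/(T+1)) ≤ (k:ℝ) * Real.log ((T+1)/T) :=
      mul_le_mul_of_nonneg_left hL hknn
    linarith [h4 ▸ h3]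
  -- main pointwise bound
  have hmain : Q * H * T^k ≤ (T+1)^k := by
    have hx : (0:ℝ) < (T+1)/T := by positivity
    have hQH : Q * H ≤ ((T+1)/T)^k := by
      have h1 : Q*H = Real.exp (Real.log H + Real.log Q) := by
        rw [Real.exp_add, Real.exp_log hH0, Real.exp_log hQ0]; ring
      have h2 : ((T+1)/T)^k = Real.exp ((k:ℝ) * Real.log ((T+1)/T)) := by
        rw [← Real.log_pow, Real.exp_log (pow_pos hx k)]
      rw [h1, h2]
      exact Real.exp_le_exp.mpr hlogHQ
    have h3 : Q*H*T^k ≤ ((T+1)/T)^k * T^k :=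
      mul_le_mul_of_nonneg_right hQH (by positivity)
    have h4 : ((T+1)/T)^k * T^k = (T+1)^k := by
      rw [div_pow]
      field_simp
    linarith [h4 ▸ h3]
  -- binomial identity
  have hchoose : (h.choose (t+1) : ℝ) * (T+1) = (h.choose t : ℝ) * (H - T) := by
    have h1 := Nat.choose_succ_right_eq h t
    have h2 : ((h.choose (t+1) * (t+1) : ℕ) : ℝ) = ((h.choose t * (h - t) : ℕ) : ℝ) := by
      exact_mod_cast congrArg (Nat.cast : ℕ → ℝ) h1
    push_cast [Nat.cast_sub (show t ≤ h by omega)] at h2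
    linarith [h2]
  have hHT : 2 ≤ H - T := by linarith
  have key2 : Q * (T+1) * T^k ≤ (H - T) * (T+1)^k := by
    have hTk : (0:ℝ) ≤ T^k := by positivity
    have hTk1 : (0:ℝ) < (T+1)^k := by positivity
    have h1 : Q*(T+1)*T^k ≤ Q*H*T^k := by
      have : Q*(T+1) ≤ Q*H := by nlinarith
      exact mul_le_mul_of_nonneg_right this hTk
    nlinarith [hmain]
  have hc0 : (0:ℝ) < (h.choose t : ℝ) := by
    exact_mod_cast Nat.choose_pos (show t ≤ h by omega)
  have key : (h.choose t : ℝ) * Q * T^k ≤ (h.choose (t+1) : ℝ) * (T+1)^k := by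
    have h3 : (h.choose t:ℝ)*Q*T^k*(T+1) ≤ (h.choose (t+1):ℝ)*(T+1)^k*(T+1) := by
      calc (h.choose t:ℝ)*Q*T^k*(T+1) = (h.choose t:ℝ)*(Q*(T+1)*T^k) := by ring
        _ ≤ (h.choose t:ℝ)*((H-T)*(T+1)^k) :=
            mul_le_mul_of_nonneg_left key2 (le_of_lt hc0)
        _ = ((h.choose t:ℝ)*(H-T))*(T+1)^k := by ring
        _ = ((h.choose (t+1):ℝ)*(T+1))*(T+1)^k := by rw [← hchoose]
        _ = (h.choose (t+1):ℝ)*(T+1)^k*(T+1) := by ring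
    exact le_of_mul_le_mul_right h3 (by linarith)
  -- finish
  rw [div_pow, div_pow, div_mul_div_comm, div_mul_div_comm,
    div_le_div_iff₀ (by positivity) (by positivity), pow_succ]
  calc (h.choose t:ℝ) * T^k * (Q^t * Q * H^k)
      = ((h.choose t:ℝ) * Q * T^k) * (Q^t * H^k) := by ring
    _ ≤ ((h.choose (t+1):ℝ) * (T+1)^k) * (Q^t * H^k) :=
        mul_le_mul_of_nonneg_right key (by positivity)
    _ = (h.choose (t+1):ℝ) * (T+1)^k * (Q^t * H^k) := by ring
end

section
/- Let V be the (hq)×h matrix over ℤ/qℤ whose rows are all vectors of the form m·e_j^T for m ∈ {0,1,…,q-1} and j ∈ [h]. For b ∈ (ℤ/qℤ)^h define Preimage_V(b) as the set of k-tuples (ξ(1),…,ξ(k)) ∈ [hq]^k with Σ_ψ V_{ξ(ψ),:} = b. Then |Preimage_V(b)| depends only on the number of nonzero coordinates of b: if b₁ and b₂ both have exactly t nonzero coordinates then |Preimage_V(b₁)| = |Preimage_V(b₂)|. -/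
/-- The row of the word-decoding matrix `V` indexed by the pair `(j, m)`
(corresponding to index `mh + j` of `[hq]`): the vector `m · e_j ∈ (ℤ/qℤ)^h`. -/
noncomputable def Vrow (q h : ℕ) [NeZero q] (r : Fin h × ZMod q) : Fin h → ZMod q :=
  Pi.single r.1 r.2

/-- `|Preimage_V(b)|`: the number of `k`-tuples of row indices of `V` whose
corresponding rows sum to `b`. -/
noncomputable def preimageCard (q h k : ℕ) [NeZero q] (b : Fin h → ZMod q) : ℕ :=
  (Finset.univ.filter (fun ξ : Fin k → Fin h × ZMod q =>
    (∑ ψ, Vrow q h (ξ ψ)) = b)).card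

open Finset

lemma sum_vrow_apply (q h k : ℕ) [NeZero q] (ξ : Fin k → Fin h × ZMod q) (j : Fin h) :
    (∑ ψ, Vrow q h (ξ ψ)) j =
      ∑ ψ ∈ Finset.univ.filter (fun ψ => (ξ ψ).1 = j), (ξ ψ).2 := by
  simp [Vrow, Finset.sum_apply, Pi.single_apply, Finset.sum_filter, eq_comm]

/-- Adjust the value of the minimal element of each fiber by `c`. -/
noncomputable def adj (q h k : ℕ) [NeZero q] (c : Fin h → ZMod q)
    (ξ : Fin k → Fin h × ZMod q) : Fin k → Fin h × ZMod q :=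
  fun ψ => ((ξ ψ).1,
    (ξ ψ).2 + if ∀ ψ', (ξ ψ').1 = (ξ ψ).1 → ψ ≤ ψ' then c (ξ ψ).1 else 0)

lemma adj_adj (q h k : ℕ) [NeZero q] (c c' : Fin h → ZMod q)
    (hcc' : ∀ j, c j + c' j = 0) (ξ : Fin k → Fin h × ZMod q) :
    adj q h k c' (adj q h k c ξ) = ξ := by
  funext ψ
  have h1 : ∀ ψ', (adj q h k c ξ ψ').1 = (ξ ψ').1 := fun _ => rfl
  simp only [adj, h1]
  split_ifs with h
  · have hz := hcc' (ξ ψ).1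
    refine Prod.ext rfl ?_
    erw [if_pos h]
    show (ξ ψ).2 + c (ξ ψ).1 + c' (ξ ψ).1 = (ξ ψ).2
    linear_combination hz
  · refine Prod.ext rfl ?_
    erw [if_neg h]
    show (ξ ψ).2 + 0 + 0 = (ξ ψ).2
    rw [add_zero, add_zero]

lemma adj_fiber_sum (q h k : ℕ) [NeZero q] (c : Fin h → ZMod q)
    (ξ : Fin k → Fin h × ZMod q) (j : Fin h) :
    ∑ ψ ∈ Finset.univ.filter (fun ψ => (adj q h k c ξ ψ).1 = j), (adj q h k c ξ ψ).2 =
      (∑ ψ ∈ Finset.univ.filter (fun ψ => (ξ ψ).1 = j), (ξ ψ).2) +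
      (if (Finset.univ.filter (fun ψ => (ξ ψ).1 = j)).Nonempty then c j else 0) := by
  have h1 : ∀ ψ', (adj q h k c ξ ψ').1 = (ξ ψ').1 := fun _ => rfl
  simp only [h1]
  set fib := Finset.univ.filter (fun ψ : Fin k => (ξ ψ).1 = j) with hfib
  have hsplit : ∑ ψ ∈ fib, (adj q h k c ξ ψ).2 =
      (∑ ψ ∈ fib, (ξ ψ).2) +
      ∑ ψ ∈ fib, (if ∀ ψ', (ξ ψ').1 = (ξ ψ).1 → ψ ≤ ψ' then c (ξ ψ).1 else 0) := by
    rw [← Finset.sum_add_distrib]; rfl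
  rw [hsplit]
  congr 1
  by_cases hne : fib.Nonempty
  · rw [if_pos hne]
    set m := fib.min' hne with hm
    have hmmem : m ∈ fib := fib.min'_mem hne
    have hmem : ∀ ψ ∈ fib, (ξ ψ).1 = j := by
      intro ψ hψ
      simpa [hfib] using hψ
    have key : ∀ ψ ∈ fib,
        (if ∀ ψ', (ξ ψ').1 = (ξ ψ).1 → ψ ≤ ψ' then c (ξ ψ).1 else 0) =
        (if ψ = m then c j else 0) := by
      intro ψ hψ
      have hψj := hmem ψ hψ
      by_cases hP : ∀ ψ', (ξ ψ').1 = (ξ ψ).1 → ψ ≤ ψ'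
      · rw [if_pos hP, hψj, if_pos]
        exact le_antisymm (hP m (by rw [hmem m hmmem, hψj])) (fib.min'_le ψ hψ)
      · rw [if_neg hP, if_neg]
        intro hψm
        exact hP (fun ψ' hψ' => by
          subst hψm
          exact fib.min'_le ψ' (by simp [hfib, hψ' , hψj]))
    rw [Finset.sum_congr rfl key, Finset.sum_ite_eq' fib m (fun _ => c j), if_pos hmmem]
  · rw [if_neg hne]
    rw [Finset.not_nonempty_iff_eq_empty] at hne
    simp [hne]

lemma preimageCard_congr_supp (q h k : ℕ) [NeZero q] (b₁ b₂ : Fin h → ZMod q)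
    (hsupp : ∀ j, b₁ j = 0 ↔ b₂ j = 0) :
    preimageCard q h k b₁ = preimageCard q h k b₂ := by
  classical
  unfold preimageCard
  set c : Fin h → ZMod q := fun j => b₂ j - b₁ j with hc
  set c' : Fin h → ZMod q := fun j => b₁ j - b₂ j with hc'
  have hcc' : ∀ j, c j + c' j = 0 := fun j => by simp [hc, hc']
  have hc'c : ∀ j, c' j + c j = 0 := fun j => by simp [hc, hc']
  have hmemdir : ∀ (b b' : Fin h → ZMod q) (d : Fin h → ZMod q),
      (∀ j, d j = b' j - b j) → (∀ j, b j = 0 ↔ b' j = 0) →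
      ∀ ξ ∈ Finset.univ.filter (fun ξ : Fin k → Fin h × ZMod q =>
        (∑ ψ, Vrow q h (ξ ψ)) = b),
      adj q h k d ξ ∈ Finset.univ.filter (fun ξ : Fin k → Fin h × ZMod q =>
        (∑ ψ, Vrow q h (ξ ψ)) = b') := by
    intro b b' d hd hbb' ξ hξ
    rw [Finset.mem_filter] at hξ ⊢
    refine ⟨Finset.mem_univ _, ?_⟩
    funext j
    rw [sum_vrow_apply, adj_fiber_sum]
    have hsum : ∑ ψ ∈ Finset.univ.filter (fun ψ => (ξ ψ).1 = j), (ξ ψ).2 = b j := by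
      rw [← sum_vrow_apply, hξ.2]
    rw [hsum]
    by_cases hne : (Finset.univ.filter (fun ψ : Fin k => (ξ ψ).1 = j)).Nonempty
    · rw [if_pos hne, hd j]; ring
    · rw [if_neg hne, add_zero]
      rw [Finset.not_nonempty_iff_eq_empty] at hne
      have : b j = 0 := by rw [← hsum, hne, Finset.sum_empty]
      rw [this, ((hbb' j).1 this).symm]
  refine Finset.card_bij' (fun ξ _ => adj q h k c ξ) (fun ξ _ => adj q h k c' ξ)
    (hmemdir b₁ b₂ c (fun j => rfl) hsupp)
    (hmemdir b₂ b₁ c' (fun j => rfl) (fun j => (hsupp j).symm))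
    (fun ξ _ => adj_adj q h k c c' hcc' ξ)
    (fun ξ _ => adj_adj q h k c' c hc'c ξ)

lemma preimageCard_comp_perm (q h k : ℕ) [NeZero q] (σ : Equiv.Perm (Fin h))
    (b : Fin h → ZMod q) :
    preimageCard q h k (b ∘ σ) = preimageCard q h k b := by
  classical
  unfold preimageCard
  have key : ∀ (τ : Equiv.Perm (Fin h)) (b : Fin h → ZMod q)
      (ξ : Fin k → Fin h × ZMod q),
      (∑ ψ, Vrow q h (ξ ψ)) = b ∘ τ →
      (∑ ψ, Vrow q h ((fun ψ => (τ (ξ ψ).1, (ξ ψ).2)) ψ)) = b := by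
    intro τ b ξ hξ
    funext j
    rw [sum_vrow_apply]
    have : (Finset.univ.filter (fun ψ : Fin k => τ (ξ ψ).1 = j)) =
        (Finset.univ.filter (fun ψ : Fin k => (ξ ψ).1 = τ.symm j)) := by
      apply Finset.filter_congr
      intro ψ _
      simp [Equiv.apply_eq_iff_eq_symm_apply]
    rw [this]
    have := congrFun hξ (τ.symm j)
    rw [sum_vrow_apply] at this
    simpa using this
  refine Finset.card_bij' (fun ξ _ => fun ψ => (σ (ξ ψ).1, (ξ ψ).2))
    (fun ξ _ => fun ψ => (σ.symm (ξ ψ).1, (ξ ψ).2)) ?_ ?_ ?_ ?_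
  · intro ξ hξ
    rw [Finset.mem_filter] at hξ ⊢
    exact ⟨Finset.mem_univ _, key σ b ξ hξ.2⟩
  · intro ξ hξ
    rw [Finset.mem_filter] at hξ ⊢
    refine ⟨Finset.mem_univ _, key σ.symm (b ∘ σ) ξ ?_⟩
    rw [hξ.2]
    funext j
    simp
  · intro ξ _; funext ψ; simp
  · intro ξ _; funext ψ; simp

/-- The size of `Preimage_V(b)` depends only on the number of nonzero coordinates
of `b`: if `b₁` and `b₂` both have exactly `t` nonzero coordinates, then
`|Preimage_V(b₁)| = |Preimage_V(b₂)|`. -/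
theorem preimage_card_depends_only_on_support (q h k t : ℕ) [NeZero q]
    (hq : 2 ≤ q) (ht : t ≤ h) (b₁ b₂ : Fin h → ZMod q)
    (hb₁ : (Finset.univ.filter (fun i => b₁ i ≠ 0)).card = t)
    (hb₂ : (Finset.univ.filter (fun i => b₂ i ≠ 0)).card = t) :
    preimageCard q h k b₁ = preimageCard q h k b₂ := by
  classical
  have hcard : Fintype.card {x : Fin h // b₂ x ≠ 0} = Fintype.card {x : Fin h // b₁ x ≠ 0} := by
    rw [Fintype.card_subtype, Fintype.card_subtype, hb₁, hb₂]
  have hcompl : ∀ (b : Fin h → ZMod q), (Finset.univ.filter (fun i => b i ≠ 0)).card = t →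
      Fintype.card {x : Fin h // ¬ b x ≠ 0} = h - t := by
    intro b hb
    rw [Fintype.card_subtype]
    have hsum := Finset.card_filter_add_card_filter_not
      (s := (Finset.univ : Finset (Fin h))) (p := fun i => b i ≠ 0)
    rw [Finset.card_univ, Fintype.card_fin, hb] at hsum
    omega
  have hcard' : Fintype.card {x : Fin h // ¬ b₂ x ≠ 0} =
      Fintype.card {x : Fin h // ¬ b₁ x ≠ 0} := by
    rw [hcompl b₁ hb₁, hcompl b₂ hb₂]
  set e : {x : Fin h // b₂ x ≠ 0} ≃ {x : Fin h // b₁ x ≠ 0} := Fintype.equivOfCardEq hcard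
  set f : {x : Fin h // ¬ b₂ x ≠ 0} ≃ {x : Fin h // ¬ b₁ x ≠ 0} := Fintype.equivOfCardEq hcard'
  set σ : Equiv.Perm (Fin h) := Equiv.subtypeCongr e f with hσ
  have hσ_prop : ∀ i, b₁ (σ i) = 0 ↔ b₂ i = 0 := by
    intro i
    by_cases hi : b₂ i ≠ 0
    · have : σ i = (e ⟨i, hi⟩ : Fin h) := by
        simp [hσ, Equiv.subtypeCongr, hi]
      rw [this]
      have := (e ⟨i, hi⟩).2
      constructor
      · intro hz; exact absurd hz this
      · intro hz; exact absurd hz hi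
    · have : σ i = (f ⟨i, hi⟩ : Fin h) := by
        simp [hσ, Equiv.subtypeCongr, hi]
      rw [this]
      have hf := (f ⟨i, hi⟩).2
      push_neg at hf hi
      simp [hf, hi]
  have step1 : preimageCard q h k (b₁ ∘ σ) = preimageCard q h k b₁ :=
    preimageCard_comp_perm q h k σ b₁
  have step2 : preimageCard q h k (b₁ ∘ σ) = preimageCard q h k b₂ :=
    preimageCard_congr_supp q h k _ _ (fun j => hσ_prop j)
  rw [← step1, step2]
end

section
/- Let a₁,…,a_m ∈ (ℤ/qℤ)^n be fixed vectors such that any D of them are linearly independent over ℤ/qℤ (q prime). Consider y_i = ⟨a_i, s⟩ + e_i where s is uniform on (ℤ/qℤ)^n and e₁,…,e_m are arbitrary random variables independent of s. Then for every v ∈ (ℤ/qℤ)^m with 1 ≤ |support(v)| ≤ D, E[exp(2πi·⟨y,v⟩/q)] = 0. -/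
open Complex Finset

lemma chiQ_congr (q : ℕ) [NeZero q] (A B : ℕ) (h : (A : ZMod q) = (B : ZMod q)) :
    Complex.exp (2 * Real.pi * Complex.I * (A : ℂ) / q) =
      Complex.exp (2 * Real.pi * Complex.I * (B : ℂ) / q) := by
  rw [ZMod.natCast_eq_natCast_iff] at h
  obtain ⟨t, ht⟩ : (q : ℤ) ∣ (B : ℤ) - (A : ℤ) := (Int.natCast_modEq_iff ..).mpr h |>.dvd
  have hq : (q : ℂ) ≠ 0 := Nat.cast_ne_zero.mpr (NeZero.ne q)
  have hB : (B : ℂ) = (A : ℂ) + q * t := by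
    have : ((B : ℤ) : ℂ) = ((A : ℤ) : ℂ) + q * t := by
      rw [show (B : ℤ) = (A : ℤ) + q * t by linarith]
      push_cast; ring
    simpa using this
  rw [hB, show 2 * (Real.pi : ℂ) * Complex.I * ((A : ℂ) + q * t) / q
      = 2 * (Real.pi : ℂ) * Complex.I * (A : ℂ) / q + t * (2 * Real.pi * Complex.I) by
    field_simp]
  rw [Complex.exp_add, Complex.exp_int_mul_two_pi_mul_I, mul_one]

noncomputable def chiQ (q : ℕ) (x : ZMod q) : ℂ :=
  Complex.exp (2 * Real.pi * Complex.I * (x.val : ℂ) / q)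

lemma chiQ_add (q : ℕ) [NeZero q] (x y : ZMod q) :
    chiQ q (x + y) = chiQ q x * chiQ q y := by
  unfold chiQ
  rw [chiQ_congr q ((x + y).val) (x.val + y.val) (by push_cast [ZMod.natCast_val]; simp)]
  rw [← Complex.exp_add]
  congr 1
  push_cast
  ring

/-- Let `a₁,…,a_m ∈ (ℤ/qℤ)^n` (q prime) be such that any `D` of them are linearly
independent, and let `y_i = ⟨a_i, s⟩ + e_i` with `s` uniform on `(ℤ/qℤ)^n` and
`e = (e₁,…,e_m)` drawn (independently of `s`) from an arbitrary distribution with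
weights `wt`.  Then for every `v ∈ (ℤ/qℤ)^m` with `1 ≤ |support(v)| ≤ D`,
`E[exp(2πi·⟨y,v⟩/q)] = 0`. -/
theorem lwe_fourier_coefficient_zero (q n m D : ℕ) [Fact q.Prime]
    (a : Fin m → Fin n → ZMod q)
    (hindep : ∀ S : Finset (Fin m), S.card ≤ D →
      LinearIndependent (ZMod q) (fun i : S => a i))
    (wt : (Fin m → ZMod q) → ℝ) (hwt : ∀ ε, 0 ≤ wt ε) (hwt1 : ∑ ε, wt ε = 1)
    (v : Fin m → ZMod q)
    (hv1 : 1 ≤ (Finset.univ.filter (fun i => v i ≠ 0)).card)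
    (hvD : (Finset.univ.filter (fun i => v i ≠ 0)).card ≤ D) :
    (∑ ε : Fin m → ZMod q, (wt ε : ℂ) * (((q : ℂ) ^ n)⁻¹ *
      ∑ s : Fin n → ZMod q,
        Complex.exp (2 * Real.pi * Complex.I *
          ((∑ i, ((∑ j, a i j * s j) + ε i) * v i).val : ℂ) / q))) = 0 := by
  have hq : q.Prime := Fact.out
  haveI : NeZero q := ⟨hq.ne_zero⟩
  set c : Fin n → ZMod q := fun j => ∑ i, v i * a i j with hc
  -- some coordinate of c is nonzero
  have hcne : ∃ j, c j ≠ 0 := by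
    by_contra hall
    push_neg at hall
    set S := Finset.univ.filter (fun i => v i ≠ 0) with hS
    have hLI := (Fintype.linearIndependent_iff).mp (hindep S hvD) (fun i => v i)
    obtain ⟨i₀, hi₀⟩ := Finset.card_pos.mp (lt_of_lt_of_le one_pos hv1)
    refine (Finset.mem_filter.mp hi₀).2 (hLI ?_ ⟨i₀, hi₀⟩)
    funext j
    have : ∑ i : S, v i * a i j = ∑ i ∈ S, v i * a i j :=
      Finset.sum_coe_sort S (fun i => v i * a i j)
    have h2 : ∑ i ∈ S, v i * a i j = ∑ i, v i * a i j := by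
      apply Finset.sum_subset (Finset.subset_univ S)
      intro x _ hx
      have : v x = 0 := by
        by_contra hvx
        exact hx (Finset.mem_filter.mpr ⟨Finset.mem_univ x, hvx⟩)
      simp [this]
    simp only [Finset.sum_apply, Pi.smul_apply, smul_eq_mul, Pi.zero_apply]
    rw [this, h2]
    exact hall j
  obtain ⟨j₀, hj₀⟩ := hcne
  -- shift vector
  set d : Fin n → ZMod q := fun j => if j = j₀ then (c j₀)⁻¹ else 0 with hd
  have hcd : ∑ j, c j * d j = 1 := by
    rw [Finset.sum_eq_single j₀]
    · simp [hd, mul_inv_cancel₀ hj₀]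
    · intro b _ hb; simp [hd, hb]
    · simp
  -- chiQ q 1 ≠ 1
  have hchi1 : chiQ q 1 ≠ 1 := by
    simp only [chiQ, ZMod.val_one_eq_one_mod]
    rw [Nat.mod_eq_of_lt hq.one_lt]
    intro h
    obtain ⟨k, hk⟩ := Complex.exp_eq_one_iff.mp h
    have hqC : (q : ℂ) ≠ 0 := Nat.cast_ne_zero.mpr hq.ne_zero
    have h1 : (1 : ℂ) = k * q := by
      field_simp at hk
      have h2pi : (2 : ℂ) * Real.pi * Complex.I ≠ 0 := by
        simp [Real.pi_ne_zero, Complex.I_ne_zero]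
      have h3 : (2*(Real.pi:ℂ)*Complex.I) * 1 = (2*(Real.pi:ℂ)*Complex.I) * ((k:ℂ)*q) := by
        rw [Nat.cast_one] at hk
        linear_combination (2*(Real.pi:ℂ)*Complex.I) * hk
      exact mul_left_cancel₀ h2pi h3
    have : (1 : ℤ) = k * q := by exact_mod_cast h1
    have hq1 : (q : ℤ) ≤ 1 := Int.le_of_dvd one_pos ⟨k, by linarith⟩
    have := hq.two_le
    omega
  -- each inner sum vanishes
  apply Finset.sum_eq_zero
  intro ε _
  set F : (Fin n → ZMod q) → ZMod q :=
    fun s => ∑ i, ((∑ j, a i j * s j) + ε i) * v i with hF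
  have hlin : ∀ t : Fin n → ZMod q, (∑ i, (∑ j, a i j * t j) * v i) = ∑ j, c j * t j := by
    intro t
    simp only [Finset.sum_mul, hc]
    rw [Finset.sum_comm]
    exact Finset.sum_congr rfl fun j _ => Finset.sum_congr rfl fun i _ => by ring
  have hFeq : ∀ s : Fin n → ZMod q, F s = (∑ j, c j * s j) + ∑ i, ε i * v i := by
    intro s
    simp only [hF, add_mul, Finset.sum_add_distrib, hlin s]
  have hshiftF : ∀ s : Fin n → ZMod q, F (s + d) = F s + 1 := by
    intro s
    rw [hFeq, hFeq, ← hcd]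
    simp only [Pi.add_apply, mul_add, Finset.sum_add_distrib]
    abel
  have hTsum : ∀ s : Fin n → ZMod q,
      Complex.exp (2 * Real.pi * Complex.I *
        (((∑ i, ((∑ j, a i j * s j) + ε i) * v i).val : ℕ) : ℂ) / q) = chiQ q (F s) := by
    intro s; rfl
  have hT : (∑ s : Fin n → ZMod q, chiQ q (F s)) = 0 := by
    have hbij : (∑ s : Fin n → ZMod q, chiQ q (F (s + d)))
        = ∑ s : Fin n → ZMod q, chiQ q (F s) :=
      Fintype.sum_equiv (Equiv.addRight d) _ _ (fun s => rfl)
    have : (∑ s : Fin n → ZMod q, chiQ q (F s))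
        = chiQ q 1 * ∑ s : Fin n → ZMod q, chiQ q (F s) := by
      calc ∑ s : Fin n → ZMod q, chiQ q (F s)
          = ∑ s : Fin n → ZMod q, chiQ q (F (s + d)) := hbij.symm
        _ = ∑ s : Fin n → ZMod q, chiQ q 1 * chiQ q (F s) :=
            Finset.sum_congr rfl fun s _ => by rw [hshiftF, chiQ_add, mul_comm]
        _ = chiQ q 1 * ∑ s : Fin n → ZMod q, chiQ q (F s) := (Finset.mul_sum ..).symm
    have h0 : (1 - chiQ q 1) * (∑ s : Fin n → ZMod q, chiQ q (F s)) = 0 := by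
      rw [sub_mul, one_mul, ← this, sub_self]
    rcases mul_eq_zero.mp h0 with h | h
    · exact (hchi1 (sub_eq_zero.mp h).symm).elim
    · exact h
  simp only [hTsum, hT, mul_zero]
end
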